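/- For every μ ∈ ℝ and all 0 < a < t < b < ∞, the conditional density of ^μT_{0,t} given ^μT_{t,0} = b, i.e. the ratio of the joint density e^{-μ²b/2}/(2π√(a(b-a)³)) of (^μT_{0,t}, ^μT_{t,0}) to the marginal density (e^{-μ²b/2}/(πb))√(t/(b-t)) of ^μT_{t,0}, equals (1/2) (b/√(at)) √((b-t)/(b-a)³); in particular it does not depend on the drift μ, and as b → ∞ it converges pointwise to 1/(2√(at)) for 0 < a < t. -/

import Mathlib

open MeasureTheory Real Filter Topology

lemma ratio_eq (c a t b : ℝ) (hc : 0 < c) (ha : 0 < a) (hat : a < t) (htb : t < b) :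
    c / (2 * π * Real.sqrt (a * (b - a) ^ 3))
        / (c / (π * b) * Real.sqrt (t / (b - t)))
      = 1 / 2 * (b / Real.sqrt (a * t)) * Real.sqrt ((b - t) / (b - a) ^ 3) := by
  have ht : (0:ℝ) < t := ha.trans hat
  have hbt : (0:ℝ) < b - t := by linarith
  have hba0 : (0:ℝ) < b - a := by linarith
  have hba : (0:ℝ) < (b - a) ^ 3 := by positivity
  have hb : (0:ℝ) < b := by linarith
  rw [Real.sqrt_mul ha.le, Real.sqrt_div ht.le, Real.sqrt_div hbt.le,
    Real.sqrt_mul ha.le]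
  have h1 : Real.sqrt a ≠ 0 := by positivity
  have h2 : Real.sqrt t ≠ 0 := by positivity
  have h3 : Real.sqrt (b - t) ≠ 0 := by positivity
  have h4 : Real.sqrt ((b - a) ^ 3) ≠ 0 := by positivity
  have h5 : π ≠ 0 := Real.pi_ne_zero
  field_simp

lemma lim_part (a t : ℝ) (ha : 0 < a) (hat : a < t) :
    Tendsto (fun b' : ℝ => 1 / 2 * (b' / Real.sqrt (a * t)) * Real.sqrt ((b' - t) / (b' - a) ^ 3))
      atTop (𝓝 (1 / (2 * Real.sqrt (a * t)))) := by
  have ht : (0:ℝ) < t := ha.trans hat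
  have hinner : Tendsto (fun b' : ℝ => (1 - t / b') / (1 - a / b') ^ 3) atTop (𝓝 1) := by
    have h1 : Tendsto (fun b' : ℝ => t / b') atTop (𝓝 0) :=
      tendsto_const_nhds.div_atTop tendsto_id
    have h2 : Tendsto (fun b' : ℝ => a / b') atTop (𝓝 0) :=
      tendsto_const_nhds.div_atTop tendsto_id
    have hd : Tendsto (fun b' : ℝ => (1 - a / b') ^ 3) atTop (𝓝 ((1 - 0) ^ 3)) :=
      (tendsto_const_nhds.sub h2).pow 3
    have hn : Tendsto (fun b' : ℝ => 1 - t / b') atTop (𝓝 (1 - 0)) :=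
      tendsto_const_nhds.sub h1
    have := hn.div hd (by norm_num)
    rw [show ((1:ℝ) - 0) / (1 - 0) ^ 3 = 1 by norm_num] at this
    exact this
  have hs : Tendsto (fun b' : ℝ => Real.sqrt ((1 - t / b') / (1 - a / b') ^ 3)) atTop (𝓝 1) := by
    have := (Real.continuous_sqrt.tendsto 1).comp hinner
    rw [Real.sqrt_one] at this
    exact this
  have hmain : Tendsto (fun b' : ℝ =>
      1 / (2 * Real.sqrt (a * t)) * Real.sqrt ((1 - t / b') / (1 - a / b') ^ 3))
      atTop (𝓝 (1 / (2 * Real.sqrt (a * t)))) := by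
    simpa using hs.const_mul (1 / (2 * Real.sqrt (a * t)))
  refine hmain.congr' ?_
  filter_upwards [eventually_gt_atTop t] with b' hb'
  have hb0 : (0:ℝ) < b' := ht.trans hb'
  have hba : (0:ℝ) < b' - a := by linarith
  have key : (1 - t / b') / (1 - a / b') ^ 3 = b' ^ 2 * ((b' - t) / (b' - a) ^ 3) := by
    have h1 : (1 - a / b') = (b' - a) / b' := by field_simp
    have h2 : (1 - t / b') = (b' - t) / b' := by field_simp
    rw [h1, h2, div_pow]
    field_simp
  rw [key, Real.sqrt_mul (sq_nonneg b') ((b' - t) / (b' - a) ^ 3), Real.sqrt_sq hb0.le]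
  ring

theorem conditional_density_lastZero_given_firstZero (μ a t b : ℝ)
    (ha : 0 < a) (hat : a < t) (htb : t < b) :
    (Real.exp (-μ ^ 2 * b / 2) / (2 * π * Real.sqrt (a * (b - a) ^ 3)))
        / (Real.exp (-μ ^ 2 * b / 2) / (π * b) * Real.sqrt (t / (b - t)))
      = 1 / 2 * (b / Real.sqrt (a * t)) * Real.sqrt ((b - t) / (b - a) ^ 3) ∧
    (∀ μ' : ℝ,
      (Real.exp (-μ' ^ 2 * b / 2) / (2 * π * Real.sqrt (a * (b - a) ^ 3)))
          / (Real.exp (-μ' ^ 2 * b / 2) / (π * b) * Real.sqrt (t / (b - t)))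
        = (Real.exp (-μ ^ 2 * b / 2) / (2 * π * Real.sqrt (a * (b - a) ^ 3)))
            / (Real.exp (-μ ^ 2 * b / 2) / (π * b) * Real.sqrt (t / (b - t)))) ∧
    Tendsto (fun b' : ℝ => 1 / 2 * (b' / Real.sqrt (a * t)) * Real.sqrt ((b' - t) / (b' - a) ^ 3))
      atTop (𝓝 (1 / (2 * Real.sqrt (a * t)))) := by
  refine ⟨ratio_eq _ a t b (Real.exp_pos _) ha hat htb, fun μ' => ?_, lim_part a t ha hat⟩
  rw [ratio_eq _ a t b (Real.exp_pos _) ha hat htb,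
    ratio_eq _ a t b (Real.exp_pos _) ha hat htb]
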